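/- (Even-definiteness of the static Skyrme model.) Let 𝕃 be a real symmetric positive semidefinite 3×3 matrix, let T be its Skyrme stress tensor, and let W ∈ ℝ³ be a unit vector with 𝕃·W = 0. Then WᵀT W ≤ 0, with equality if and only if 𝕃 = 0. -/

import Mathlib

open Matrix

/-- The Skyrme stress tensor of a real 3×3 matrix `L`:
`T = L - ½(tr L)·I - ½(L·L - ¼ tr(L·L)·I - (tr L)·L + ¼ (tr L)²·I)`. -/
noncomputable def skyrmeStress (L : Matrix (Fin 3) (Fin 3) ℝ) : Matrix (Fin 3) (Fin 3) ℝ :=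
  L - (L.trace / 2) • (1 : Matrix (Fin 3) (Fin 3) ℝ)
    - (1 / 2 : ℝ) • (L * L - ((L * L).trace / 4) • (1 : Matrix (Fin 3) (Fin 3) ℝ)
        - L.trace • L + (L.trace ^ 2 / 4) • (1 : Matrix (Fin 3) (Fin 3) ℝ))

lemma entry_sq_le {n : Type*} [Fintype n] [DecidableEq n] {M : Matrix n n ℝ}
    (hM : M.PosSemidef) (i j : n) : (M i j)^2 ≤ M i i * M j j := by
  have hsymm : M j i = M i j := by
    have := congrFun (congrFun hM.1 i) j
    simpa using this
  have key : ∀ x : ℝ, 0 ≤ M i i * (x * x) + (2 * M i j) * x + M j j := by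
    intro x
    have h := hM.dotProduct_mulVec_nonneg ((Pi.single i x + Pi.single j 1 : n → ℝ))
    simp only [star_trivial, dotProduct_add, add_dotProduct,
      mulVec_add, single_dotProduct, mulVec_single, smul_eq_mul, mul_one,
      Pi.smul_apply, MulOpposite.smul_eq_mul_unop, MulOpposite.unop_op, Matrix.col_apply] at h
    rw [hsymm] at h
    ring_nf at h ⊢
    linarith
  have hd := discrim_le_zero key
  simp only [discrim] at hd
  nlinarith [hd]

lemma diag_nonneg {n : Type*} [Fintype n] [DecidableEq n] {M : Matrix n n ℝ}
    (hM : M.PosSemidef) (i : n) : 0 ≤ M i i := by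
  have h := hM.dotProduct_mulVec_nonneg (Pi.single i 1)
  simpa using h

theorem stmt4 (𝕃 : Matrix (Fin 3) (Fin 3) ℝ) (hsymm : 𝕃.IsSymm) (hpsd : 𝕃.PosSemidef)
    (W : Fin 3 → ℝ) (hW : W ⬝ᵥ W = 1) (hker : 𝕃.mulVec W = 0) :
    W ⬝ᵥ (skyrmeStress 𝕃).mulVec W ≤ 0 ∧
      (W ⬝ᵥ (skyrmeStress 𝕃).mulVec W = 0 ↔ 𝕃 = 0) := by
  set t := 𝕃.trace with ht
  set s := (𝕃 * 𝕃).trace with hs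
  have h2 : (𝕃 * 𝕃).mulVec W = 0 := by
    rw [← mulVec_mulVec, hker, mulVec_zero]
  have hval : W ⬝ᵥ (skyrmeStress 𝕃).mulVec W = -t/2 + s/8 - t^2/8 := by
    simp only [skyrmeStress, sub_mulVec, add_mulVec, smul_mulVec, one_mulVec,
      hker, h2, dotProduct_sub, dotProduct_add, dotProduct_smul, dotProduct_zero,
      hW, smul_eq_mul, ← ht, ← hs]
    ring
  -- trace nonneg
  have htn : 0 ≤ t := by
    have := diag_nonneg hpsd 0
    have := diag_nonneg hpsd 1
    have := diag_nonneg hpsd 2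
    simp only [ht, Matrix.trace, Matrix.diag, Fin.sum_univ_three]
    linarith
  -- s ≤ t^2
  have hsym01 : 𝕃 1 0 = 𝕃 0 1 := by have := congrFun (congrFun hsymm 0) 1; simpa using this
  have hsym02 : 𝕃 2 0 = 𝕃 0 2 := by have := congrFun (congrFun hsymm 0) 2; simpa using this
  have hsym12 : 𝕃 2 1 = 𝕃 1 2 := by have := congrFun (congrFun hsymm 1) 2; simpa using this
  have e01 := entry_sq_le hpsd 0 1
  have e02 := entry_sq_le hpsd 0 2
  have e12 := entry_sq_le hpsd 1 2
  have hst : s ≤ t^2 := by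
    simp only [hs, ht, Matrix.trace, Matrix.diag, Matrix.mul_apply, Fin.sum_univ_three,
      hsym01, hsym02, hsym12]
    nlinarith [e01, e02, e12]
  constructor
  · rw [hval]; linarith
  · rw [hval]
    constructor
    · intro h0
      have ht0 : t = 0 := by nlinarith
      -- trace zero PSD ⇒ all diagonal zero ⇒ matrix zero
      have d0 := diag_nonneg hpsd 0
      have d1 := diag_nonneg hpsd 1
      have d2 := diag_nonneg hpsd 2
      have hsum : 𝕃 0 0 + 𝕃 1 1 + 𝕃 2 2 = 0 := by
        simpa [ht, Matrix.trace, Matrix.diag, Fin.sum_univ_three] using ht0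
      have hd0 : 𝕃 0 0 = 0 := by linarith
      have hd1 : 𝕃 1 1 = 0 := by linarith
      have hd2 : 𝕃 2 2 = 0 := by linarith
      have sq0 : ∀ y : ℝ, y^2 ≤ 0 → y = 0 := fun y hy =>
        pow_eq_zero_iff two_ne_zero |>.mp (le_antisymm hy (sq_nonneg y))
      have h01 : 𝕃 0 1 = 0 := sq0 _ (by rw [hd0, hd1] at e01; simpa using e01)
      have h02 : 𝕃 0 2 = 0 := sq0 _ (by rw [hd0, hd2] at e02; simpa using e02)
      have h12 : 𝕃 1 2 = 0 := sq0 _ (by rw [hd1, hd2] at e12; simpa using e12)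
      ext i j
      fin_cases i <;> fin_cases j <;>
        simp only [Matrix.zero_apply] <;>
        first
          | exact hd0 | exact hd1 | exact hd2
          | exact h01 | exact h02 | exact h12
          | exact hsym01 ▸ h01 | exact hsym02 ▸ h02
          | exact hsym12 ▸ h12
    · intro h0
      subst h0
      simp [ht, hs]
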